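/- Let M be an n×n matrix over K = 𝔽_{q^n}. Then: (i) for every z ∈ K the matrix D_z(M) is a Dickson matrix; (ii) M lies in the K-linear span of the set {D_z(M) : z ∈ K}; and (iii) for every 𝔽_q-subspace W of the space of Dickson matrices such that M lies in the K-linear span of W, one has D_z(M) ∈ W for every z ∈ K. (In other words, the contraction space {D_z(M) : z ∈ K} is the unique subspace of the subgeometry of Dickson points of minimal dimension whose extension contains the point determined by M.) -/

import Mathlib

/-- The σ-twist of a matrix: `(M^[σ])_{i,j} = (M_{i-1,j-1})^q` (indices mod `n`). -/
def sigmaTwist (q : ℕ) {n : ℕ} {K : Type*} [Field K]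
    (M : Matrix (ZMod n) (ZMod n) K) : Matrix (ZMod n) (ZMod n) K :=
  Matrix.of fun i j => (M (i - 1) (j - 1)) ^ q

/-- A matrix is a Dickson matrix if it is fixed by the σ-twist. -/
def IsDickson (q : ℕ) {n : ℕ} {K : Type*} [Field K]
    (M : Matrix (ZMod n) (ZMod n) K) : Prop :=
  sigmaTwist q M = M

/-- The contraction `D_z(M) = ∑_{j<n} z^{q^j} • M^{[σ^j]}`. -/
def contractionD (q n : ℕ) {K : Type*} [Field K] (z : K)
    (M : Matrix (ZMod n) (ZMod n) K) : Matrix (ZMod n) (ZMod n) K :=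
  ∑ j ∈ Finset.range n, z ^ q ^ j • (sigmaTwist q)^[j] M

namespace Stmt0Aux

lemma sum_shift_cyclic {α : Type*} [AddCommGroup α] {n : ℕ} (g : ℕ → α) (hg : g n = g 0) :
    ∑ j ∈ Finset.range n, g (j + 1) = ∑ j ∈ Finset.range n, g j := by
  have h := (Finset.sum_range_succ' g n).symm.trans (Finset.sum_range_succ g n)
  rw [hg] at h
  exact add_right_cancel h

variable {q n : ℕ} {K : Type*} [Field K]

lemma charwork (hq : ∃ p k : ℕ, p.Prime ∧ 0 < k ∧ q = p ^ k) [Fintype K] {n : ℕ}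
    (hK : Fintype.card K = q ^ n) : ∀ a b : K, (a + b) ^ q = a ^ q + b ^ q := by
  obtain ⟨p, k, hp, hk, rfl⟩ := hq
  set r := ringChar K with hr
  haveI : CharP K r := ringChar.charP K
  have hrp : r.Prime := CharP.char_is_prime K r
  have hdvd : r ∣ (p ^ k) ^ n := by
    rw [← CharP.cast_eq_zero_iff K r]
    rw [← hK]
    exact FiniteField.cast_card_eq_zero K
  have hrep : r = p := by
    rw [← pow_mul] at hdvd
    exact (Nat.prime_dvd_prime_iff_eq hrp hp).mp (hrp.dvd_of_dvd_pow hdvd)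
  haveI : CharP K p := hrep ▸ ringChar.charP K
  haveI := Fact.mk hp
  haveI : ExpChar K p := ExpChar.prime hp
  intro a b
  exact add_pow_char_pow (p := p) (n := k) ..

lemma pow_qn [Fintype K] (hK : Fintype.card K = q ^ n) (x : K) : x ^ q ^ n = x := by
  rw [← hK]; exact FiniteField.pow_card x

lemma sigmaTwist_smul (c : K) (A : Matrix (ZMod n) (ZMod n) K) :
    sigmaTwist q (c • A) = c ^ q • sigmaTwist q A := by
  ext i j
  simp [sigmaTwist, mul_pow]

lemma sigmaTwist_add (hfr : ∀ a b : K, (a + b) ^ q = a ^ q + b ^ q)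
    (A B : Matrix (ZMod n) (ZMod n) K) :
    sigmaTwist q (A + B) = sigmaTwist q A + sigmaTwist q B := by
  ext i j
  simp [sigmaTwist, hfr]

lemma sigmaTwist_zero (hq0 : q ≠ 0) :
    sigmaTwist q (0 : Matrix (ZMod n) (ZMod n) K) = 0 := by
  ext i j
  simp [sigmaTwist, zero_pow hq0]

lemma sigmaTwist_iter_smul (c : K) (A : Matrix (ZMod n) (ZMod n) K) (j : ℕ) :
    (sigmaTwist q)^[j] (c • A) = c ^ q ^ j • (sigmaTwist q)^[j] A := by
  induction j with
  | zero => simp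
  | succ j ih =>
      rw [Function.iterate_succ_apply', Function.iterate_succ_apply', ih, sigmaTwist_smul,
        ← pow_mul, ← pow_succ]

lemma sigmaTwist_iter_add (hfr : ∀ a b : K, (a + b) ^ q = a ^ q + b ^ q)
    (A B : Matrix (ZMod n) (ZMod n) K) (j : ℕ) :
    (sigmaTwist q)^[j] (A + B) = (sigmaTwist q)^[j] A + (sigmaTwist q)^[j] B := by
  induction j with
  | zero => simp
  | succ j ih =>
      rw [Function.iterate_succ_apply', Function.iterate_succ_apply',
        Function.iterate_succ_apply', ih, sigmaTwist_add hfr]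

lemma sigmaTwist_iter_zero (hq0 : q ≠ 0) (j : ℕ) :
    (sigmaTwist q)^[j] (0 : Matrix (ZMod n) (ZMod n) K) = 0 := by
  induction j with
  | zero => simp
  | succ j ih => rw [Function.iterate_succ_apply', ih, sigmaTwist_zero hq0]

lemma sigmaTwist_iter_apply (A : Matrix (ZMod n) (ZMod n) K) (j : ℕ) (i i' : ZMod n) :
    (sigmaTwist q)^[j] A i i' = (A (i - (j : ZMod n)) (i' - (j : ZMod n))) ^ q ^ j := by
  induction j generalizing i i' with
  | zero => simp
  | succ j ih =>
      rw [Function.iterate_succ_apply']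
      show ((sigmaTwist q)^[j] A (i - 1) (i' - 1)) ^ q = _
      rw [ih, ← pow_mul, ← pow_succ]
      congr 2 <;> push_cast <;> ring

lemma sigmaTwist_iter_n (hpow : ∀ x : K, x ^ q ^ n = x) (A : Matrix (ZMod n) (ZMod n) K) :
    (sigmaTwist q)^[n] A = A := by
  ext i j
  rw [sigmaTwist_iter_apply, ZMod.natCast_self, sub_zero, sub_zero, hpow]

lemma isDickson_iter {A : Matrix (ZMod n) (ZMod n) K} (hA : IsDickson q A) (j : ℕ) :
    (sigmaTwist q)^[j] A = A := by
  induction j with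
  | zero => rfl
  | succ j ih => rw [Function.iterate_succ_apply', ih, hA]

lemma sigmaTwist_sum {ι : Type*} (hfr : ∀ a b : K, (a + b) ^ q = a ^ q + b ^ q) (hq0 : q ≠ 0)
    (s : Finset ι) (f : ι → Matrix (ZMod n) (ZMod n) K) :
    sigmaTwist q (∑ i ∈ s, f i) = ∑ i ∈ s, sigmaTwist q (f i) := by
  classical
  induction s using Finset.induction with
  | empty => simpa using sigmaTwist_zero hq0
  | insert _ _ hx ih => rw [Finset.sum_insert hx, Finset.sum_insert hx, sigmaTwist_add hfr, ih]

end Stmt0Aux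

namespace Stmt0Aux

variable {q n : ℕ} {K : Type*} [Field K]

lemma contraction_isDickson (hfr : ∀ a b : K, (a + b) ^ q = a ^ q + b ^ q) (hq0 : q ≠ 0)
    (hpow : ∀ x : K, x ^ q ^ n = x) (z : K) (M : Matrix (ZMod n) (ZMod n) K) :
    IsDickson q (contractionD q n z M) := by
  unfold IsDickson contractionD
  rw [sigmaTwist_sum hfr hq0]
  have hterm : ∀ j : ℕ, sigmaTwist q (z ^ q ^ j • (sigmaTwist q)^[j] M) =
      z ^ q ^ (j + 1) • (sigmaTwist q)^[j + 1] M := by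
    intro j
    rw [sigmaTwist_smul, ← pow_mul, ← pow_succ, Function.iterate_succ_apply']
  calc ∑ j ∈ Finset.range n, sigmaTwist q (z ^ q ^ j • (sigmaTwist q)^[j] M)
      = ∑ j ∈ Finset.range n, z ^ q ^ (j + 1) • (sigmaTwist q)^[j + 1] M :=
        Finset.sum_congr rfl fun j _ => hterm j
    _ = ∑ j ∈ Finset.range n, z ^ q ^ j • (sigmaTwist q)^[j] M := by
        apply sum_shift_cyclic (g := fun j => z ^ q ^ j • (sigmaTwist q)^[j] M)
        simp [hpow z, sigmaTwist_iter_n hpow]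

lemma trace_fixed (hfr : ∀ a b : K, (a + b) ^ q = a ^ q + b ^ q) (hq0 : q ≠ 0)
    (hpow : ∀ x : K, x ^ q ^ n = x) (z : K) :
    (∑ j ∈ Finset.range n, z ^ q ^ j) ^ q = ∑ j ∈ Finset.range n, z ^ q ^ j := by
  let F : K →+* K :=
    { toFun := fun x => x ^ q
      map_one' := one_pow q
      map_mul' := fun a b => mul_pow a b q
      map_zero' := zero_pow hq0
      map_add' := hfr }
  calc (∑ j ∈ Finset.range n, z ^ q ^ j) ^ q
      = F (∑ j ∈ Finset.range n, z ^ q ^ j) := rfl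
    _ = ∑ j ∈ Finset.range n, F (z ^ q ^ j) := map_sum F _ _
    _ = ∑ j ∈ Finset.range n, z ^ q ^ (j + 1) := by
        refine Finset.sum_congr rfl fun j _ => ?_
        show (z ^ q ^ j) ^ q = _
        rw [← pow_mul, ← pow_succ]
    _ = ∑ j ∈ Finset.range n, z ^ q ^ j := by
        apply sum_shift_cyclic (g := fun j => z ^ q ^ j)
        simp [hpow z]

lemma contractionD_add (hfr : ∀ a b : K, (a + b) ^ q = a ^ q + b ^ q)
    (z : K) (A B : Matrix (ZMod n) (ZMod n) K) :
    contractionD q n z (A + B) = contractionD q n z A + contractionD q n z B := by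
  unfold contractionD
  rw [← Finset.sum_add_distrib]
  exact Finset.sum_congr rfl fun j _ => by rw [sigmaTwist_iter_add hfr, smul_add]

lemma contractionD_smul (z c : K) (A : Matrix (ZMod n) (ZMod n) K) :
    contractionD q n z (c • A) = contractionD q n (z * c) A := by
  unfold contractionD
  refine Finset.sum_congr rfl fun j _ => ?_
  rw [sigmaTwist_iter_smul, smul_smul, ← mul_pow]

lemma contractionD_zero (hq0 : q ≠ 0) (z : K) :
    contractionD q n z (0 : Matrix (ZMod n) (ZMod n) K) = 0 := by
  unfold contractionD
  refine Finset.sum_eq_zero fun j _ => ?_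
  rw [sigmaTwist_iter_zero hq0, smul_zero]

lemma contractionD_of_dickson (z : K) {A : Matrix (ZMod n) (ZMod n) K} (hA : IsDickson q A) :
    contractionD q n z A = (∑ j ∈ Finset.range n, z ^ q ^ j) • A := by
  unfold contractionD
  rw [Finset.sum_smul]
  exact Finset.sum_congr rfl fun j _ => by rw [isDickson_iter hA]

end Stmt0Aux

namespace Stmt0Aux

variable {q n : ℕ} {K : Type*} [Field K]

lemma phi_ne [Fintype K] (hq1 : 1 < q) (hK : Fintype.card K = q ^ n)
    {i j : Fin n} (hij : (i : ℕ) < (j : ℕ)) :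
    (powMonoidHom (q ^ (i : ℕ)) : K →* K) ≠ powMonoidHom (q ^ (j : ℕ)) := by
  intro heq
  set a := q ^ (i : ℕ) with ha
  set b := q ^ (j : ℕ) with hb
  have hab : a < b := Nat.pow_lt_pow_right hq1 hij
  set P : Polynomial K := Polynomial.X ^ b - Polynomial.X ^ a with hP
  have heval : ∀ x : K, P.eval x = 0 := by
    intro x
    have hx : x ^ a = x ^ b := DFunLike.congr_fun heq x
    simp [hP, hx]
  have hdeg : P.natDegree < Fintype.card K := by
    refine lt_of_le_of_lt (Polynomial.natDegree_sub_le _ _) ?_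
    rw [hK]
    simp only [Polynomial.natDegree_X_pow]
    exact max_lt (Nat.pow_lt_pow_right hq1 j.isLt)
      (lt_trans hab (Nat.pow_lt_pow_right hq1 j.isLt))
  have hP0 : P = 0 :=
    Polynomial.eq_zero_of_natDegree_lt_card_of_eval_eq_zero P Function.injective_id
      (fun x => heval x) hdeg
  have := congrArg (fun p => Polynomial.coeff p b) hP0
  simp [hP, Polynomial.coeff_X_pow, hab.ne'] at this

lemma phi_inj [Fintype K] (hq1 : 1 < q) (hK : Fintype.card K = q ^ n) :
    Function.Injective (fun j : Fin n => (powMonoidHom (q ^ (j : ℕ)) : K →* K)) := by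
  intro i j h
  by_contra hne
  have hv : (i : ℕ) ≠ (j : ℕ) := fun hc => hne (Fin.ext hc)
  rcases hv.lt_or_gt with hlt | hlt
  · exact phi_ne hq1 hK hlt h
  · exact phi_ne hq1 hK hlt h.symm

lemma mem_span_contraction [NeZero n] [Fintype K] (hq1 : 1 < q)
    (hK : Fintype.card K = q ^ n) (M : Matrix (ZMod n) (ZMod n) K) :
    M ∈ Submodule.span K {A | ∃ z : K, A = contractionD q n z M} := by
  classical
  set S : (Fin n → K) →ₗ[K] Matrix (ZMod n) (ZMod n) K :=
    { toFun := fun w => ∑ j : Fin n, w j • (sigmaTwist q)^[(j : ℕ)] M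
      map_add' := fun w w' => by simp [add_smul, Finset.sum_add_distrib]
      map_smul' := fun c w => by simp [Finset.smul_sum, smul_smul] } with hS
  set v : K → (Fin n → K) := fun z j => z ^ q ^ (j : ℕ) with hv
  set e0 : Fin n → K := fun j => if (0 : Fin n) = j then 1 else 0 with he0def
  have he0 : e0 ∈ Submodule.span K (Set.range v) := by
    by_contra h
    obtain ⟨f, hf0, hmap⟩ := Submodule.exists_dual_map_eq_bot_of_notMem h inferInstance
    set c : Fin n → K := fun i => f (fun j => if i = j then 1 else 0) with hc
    have hzero : ∀ z : K, ∑ i : Fin n, z ^ q ^ (i : ℕ) * c i = 0 := by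
      intro z
      have hmem : f (v z) ∈ (Submodule.span K (Set.range v)).map f :=
        Submodule.mem_map_of_mem (Submodule.subset_span ⟨z, rfl⟩)
      rw [hmap, Submodule.mem_bot] at hmem
      calc ∑ i : Fin n, z ^ q ^ (i : ℕ) * c i
          = ∑ i : Fin n, v z i • f (fun j => if i = j then 1 else 0) := by
            refine Finset.sum_congr rfl fun i _ => ?_
            rw [hv, smul_eq_mul]
        _ = f (v z) := (LinearMap.pi_apply_eq_sum_univ f (v z)).symm
        _ = 0 := hmem
    have hli : LinearIndependent K
        (fun j : Fin n => ((powMonoidHom (q ^ (j : ℕ)) : K →* K) : K → K)) :=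
      (linearIndependent_monoidHom K K).comp _ (phi_inj hq1 hK)
    have hall : ∀ i : Fin n, c i = 0 := by
      refine Fintype.linearIndependent_iff.mp hli c ?_
      funext x
      have := hzero x
      simpa [powMonoidHom, mul_comm] using this
    apply hf0
    have : f e0 = c 0 := rfl
    rw [this, hall 0]
  have hSe0 : S e0 = M := by
    rw [hS, he0def]
    show (∑ j : Fin n, (if (0 : Fin n) = j then (1 : K) else 0) • (sigmaTwist q)^[(j : ℕ)] M) = M
    simp [ite_smul]
  have hSv : ∀ z : K, S (v z) = contractionD q n z M := by
    intro z
    show (∑ j : Fin n, z ^ q ^ (j : ℕ) • (sigmaTwist q)^[(j : ℕ)] M) = _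
    rw [contractionD, Finset.sum_range]
  have hmem : S e0 ∈ Submodule.map S (Submodule.span K (Set.range v)) :=
    Submodule.mem_map_of_mem he0
  rw [Submodule.map_span] at hmem
  have final : S e0 ∈ Submodule.span K {A | ∃ z : K, A = contractionD q n z M} := by
    refine Submodule.span_mono ?_ hmem
    rintro _ ⟨_, ⟨z, rfl⟩, rfl⟩
    exact ⟨z, hSv z⟩
  rwa [hSe0] at final

end Stmt0Aux

/-- The contraction space `{D_z(M) : z ∈ K}` of `M` consists of Dickson matrices,
its `K`-linear span contains `M`, and it is contained in every `𝔽_q`-subspace `W`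
of the space of Dickson matrices whose `K`-linear span contains `M`. -/
theorem stmt0 (q n : ℕ) [NeZero n]
    (hq : ∃ p k : ℕ, p.Prime ∧ 0 < k ∧ q = p ^ k)
    (K : Type*) [Field K] [Fintype K] (hK : Fintype.card K = q ^ n)
    (M : Matrix (ZMod n) (ZMod n) K) :
    (∀ z : K, IsDickson q (contractionD q n z M)) ∧
    M ∈ Submodule.span K {A | ∃ z : K, A = contractionD q n z M} ∧
    (∀ W : Set (Matrix (ZMod n) (ZMod n) K),
      (∀ A ∈ W, IsDickson q A) →
      (0 : Matrix (ZMod n) (ZMod n) K) ∈ W →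
      (∀ A ∈ W, ∀ B ∈ W, A + B ∈ W) →
      (∀ c : K, c ^ q = c → ∀ A ∈ W, c • A ∈ W) →
      M ∈ Submodule.span K W →
      ∀ z : K, contractionD q n z M ∈ W) := by
  have hq1 : 1 < q := by
    obtain ⟨p, k, hp, hk, rfl⟩ := hq
    exact Nat.one_lt_pow hk.ne' hp.one_lt
  have hq0 : q ≠ 0 := by omega
  have hfr : ∀ a b : K, (a + b) ^ q = a ^ q + b ^ q := Stmt0Aux.charwork hq hK
  have hpow : ∀ x : K, x ^ q ^ n = x := Stmt0Aux.pow_qn hK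
  refine ⟨fun z => Stmt0Aux.contraction_isDickson hfr hq0 hpow z M,
    Stmt0Aux.mem_span_contraction hq1 hK M, ?_⟩
  intro W hdick h0 hadd hsmul hspan z
  have key : ∀ A ∈ Submodule.span K W, ∀ w : K, contractionD q n w A ∈ W := by
    intro A hA
    induction hA using Submodule.span_induction with
    | mem A hAW =>
        intro w
        rw [Stmt0Aux.contractionD_of_dickson w (hdick A hAW)]
        exact hsmul _ (Stmt0Aux.trace_fixed hfr hq0 hpow w) A hAW
    | zero =>
        intro w
        rw [Stmt0Aux.contractionD_zero hq0]
        exact h0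
    | add A B _ _ ihA ihB =>
        intro w
        rw [Stmt0Aux.contractionD_add hfr]
        exact hadd _ (ihA w) _ (ihB w)
    | smul c A _ ih =>
        intro w
        rw [Stmt0Aux.contractionD_smul]
        exact ih (w * c)
  exact key M hspan z
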